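/- Let K be a field and R = K[x,y]/(f) where f = y^3 - x^4 + p2*x^2*y + p1*x*y + p0*y + q2*x^2 + q1*x + q0. Let F = x^2 + a*y + b*x + c and G = x*y + d*y + e*x + f0 be elements of R with a ≠ 0. Then (y+e)*F - (x+b-d)*G is congruent, modulo the ideal generated by F and G, to y^2 + g*y + h*x + i, where g = a^{-1}*(c + d*(d-b)) + e, h = a^{-1}*(e*d - f0), and i = a^{-1}*(e*c + f0*(d-b)). In particular, y^2 + g*y + h*x + i lies in the ideal generated by F and G in R. -/

import Mathlib

open MvPolynomial

noncomputable section

/-- The normalized defining polynomial of a `C_{3,4}` curve: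
`f = y^3 - x^4 + p2*x^2*y + p1*x*y + p0*y + q2*x^2 + q1*x + q0`,
with `x = X 0` and `y = X 1`. -/
def c34poly {K : Type*} [Field K] (p2 p1 p0 q2 q1 q0 : K) : MvPolynomial (Fin 2) K :=
  (X 1) ^ 3 - (X 0) ^ 4 + C p2 * (X 0) ^ 2 * X 1 + C p1 * X 0 * X 1 + C p0 * X 1
    + C q2 * (X 0) ^ 2 + C q1 * X 0 + C q0

set_option maxHeartbeats 1000000 in
set_option synthInstance.maxHeartbeats 400000 in
theorem stmt0 (K : Type*) [Field K] (p2 p1 p0 q2 q1 q0 a b c d e f0 : K) (ha : a ≠ 0) :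
    let R := MvPolynomial (Fin 2) K ⧸ Ideal.span {c34poly p2 p1 p0 q2 q1 q0}
    let π : MvPolynomial (Fin 2) K →+* R := Ideal.Quotient.mk _
    let xR : R := π (X 0)
    let yR : R := π (X 1)
    let Co : K → R := fun u => π (C u)
    let F : R := xR ^ 2 + Co a * yR + Co b * xR + Co c
    let G : R := xR * yR + Co d * yR + Co e * xR + Co f0
    let g : K := a⁻¹ * (c + d * (d - b)) + e
    let h : K := a⁻¹ * (e * d - f0)
    let i : K := a⁻¹ * (e * c + f0 * (d - b))
    ((yR + Co e) * F - (xR + Co b - Co d) * G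
        - (yR ^ 2 + Co g * yR + Co h * xR + Co i) ∈ Ideal.span {F, G})
      ∧ (yR ^ 2 + Co g * yR + Co h * xR + Co i ∈ Ideal.span {F, G}) := by
  intro R π xR yR Co F G g h i
  have hg : a * g = c + d * d - d * b + a * e := by simp only [g]; rw [mul_add, ← mul_assoc, mul_inv_cancel₀ ha, one_mul]; ring
  have hh : a * h = e * d - f0 := by simp only [h]; rw [← mul_assoc, mul_inv_cancel₀ ha, one_mul]
  have hi : a * i = e * c + f0 * d - f0 * b := by simp only [i]; rw [← mul_assoc, mul_inv_cancel₀ ha, one_mul]; ring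
  have hg' : (C a : MvPolynomial (Fin 2) K) * C g = C c + C d * C d - C d * C b + C a * C e := by
    rw [← C_mul, hg]; simp only [C_add, C_sub, C_mul]
  have hh' : (C a : MvPolynomial (Fin 2) K) * C h = C e * C d - C f0 := by
    rw [← C_mul, hh]; simp only [C_sub, C_mul]
  have hi' : (C a : MvPolynomial (Fin 2) K) * C i = C e * C c + C f0 * C d - C f0 * C b := by
    rw [← C_mul, hi]; simp only [C_add, C_sub, C_mul]
  have keyP : ((X 1 : MvPolynomial (Fin 2) K) + C e) * (X 0 ^ 2 + C a * X 1 + C b * X 0 + C c)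
      - (X 0 + C b - C d) * (X 0 * X 1 + C d * X 1 + C e * X 0 + C f0)
      = C a * ((X 1) ^ 2 + C g * X 1 + C h * X 0 + C i) := by
    linear_combination -((X 1 : MvPolynomial (Fin 2) K) * hg'
      + (X 0 : MvPolynomial (Fin 2) K) * hh' + hi')
  have key : (yR + Co e) * F - (xR + Co b - Co d) * G
      = Co a * (yR ^ 2 + Co g * yR + Co h * xR + Co i) := by
    simp only [F, G, xR, yR, Co]
    have := congrArg π keyP
    simpa only [map_add, map_sub, map_mul, map_pow] using this
  have hS : (yR + Co e) * F - (xR + Co b - Co d) * G ∈ Ideal.span {F, G} := by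
    refine Ideal.sub_mem _ ?_ ?_
    · exact Ideal.mul_mem_left _ _ (Ideal.subset_span (by simp))
    · exact Ideal.mul_mem_left _ _ (Ideal.subset_span (by simp))
  have hT : yR ^ 2 + Co g * yR + Co h * xR + Co i ∈ Ideal.span {F, G} := by
    have h1 := Ideal.mul_mem_left _ (Co a⁻¹) (key ▸ hS)
    have h2 : Co a⁻¹ * Co a = 1 := by
      simp only [Co, ← map_mul, inv_mul_cancel₀ ha, map_one]
    rwa [← mul_assoc, h2, one_mul] at h1
  exact ⟨Ideal.sub_mem _ hS hT, hT⟩
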